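/- Let (X,B,b) be a coarse proximity space with boundary UX (the set of clusters in the Smirnov compactification of the discrete extension δ containing no bounded set). If σ ∈ UX and A, B ∈ σ, then A b B. -/
import Mathlib


open Set

universe u
variable {X : Type u}

/-- The axioms of a coarse proximity structure: a bornology `B` (contains singletons,
closed under subsets and finite unions) and a relation `b` satisfying symmetry,
unboundedness of related sets, relatedness of sets with unbounded intersection,
the union axiom, and the strong axiom. -/
structure IsCoarseProximity (B : Set (Set X)) (b : Set X → Set X → Prop) : Prop where
  singleton_mem : ∀ x : X, {x} ∈ B
  subset_mem : ∀ A C : Set X, A ∈ B → C ⊆ A → C ∈ B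
  union_mem : ∀ A C : Set X, A ∈ B → C ∈ B → A ∪ C ∈ B
  symm : ∀ A C : Set X, b A C → b C A
  unbounded_of_rel : ∀ A C : Set X, b A C → A ∉ B ∧ C ∉ B
  rel_of_inter : ∀ A C : Set X, A ∩ C ∉ B → b A C
  union_iff : ∀ A C D : Set X, b (A ∪ C) D ↔ b A D ∨ b C D
  strong : ∀ A C : Set X, ¬ b A C → ∃ E : Set X, ¬ b A E ∧ ¬ b (univ \ E) C

/-- A coarse proximity space structure on `X`. -/
structure CoarseProximity (X : Type u) where
  B : Set (Set X)
  b : Set X → Set X → Prop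
  isCP : IsCoarseProximity B b

/-- The weak asymptotic resemblance induced by a coarse proximity. -/
def phi (cp : CoarseProximity X) (A C : Set X) : Prop :=
  (∀ C' ⊆ C, C' ∉ cp.B → cp.b A C') ∧ (∀ A' ⊆ A, A' ∉ cp.B → cp.b A' C)

/-- The discrete extension of the coarse proximity `b`. -/
def deltaExt (cp : CoarseProximity X) (A C : Set X) : Prop :=
  (A ∩ C).Nonempty ∨ cp.b A C

/-- A cluster in the proximity space given by the discrete extension of `b`:
any two members are close, any set close to all members is a member, and a union
belongs only if one of the pieces does. -/
structure IsCluster (cp : CoarseProximity X) (σ : Set (Set X)) : Prop where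
  close : ∀ A ∈ σ, ∀ C ∈ σ, deltaExt cp A C
  mem_of_close : ∀ C : Set X, (∀ A ∈ σ, deltaExt cp C A) → C ∈ σ
  union_cases : ∀ A C : Set X, A ∪ C ∈ σ → A ∈ σ ∨ C ∈ σ

/-- The boundary `𝒰X` of the coarse proximity space: clusters (in the Smirnov
compactification of the discrete extension) containing no bounded set. -/
def UX (cp : CoarseProximity X) : Set (Set (Set X)) :=
  {σ | IsCluster cp σ ∧ ∀ A ∈ σ, A ∉ cp.B}

/-- The trace `A' = cl_𝔛(A) ∩ 𝒰X` of `A ⊆ X` in the boundary; a cluster of the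
boundary lies in the closure of `A` in the Smirnov compactification iff `A` is a
member of the cluster. -/
def trace (cp : CoarseProximity X) (A : Set X) : Set (Set (Set X)) :=
  {σ ∈ UX cp | A ∈ σ}

/-- Relative closure in a subspace `Y` of the Smirnov compactification: a cluster
`σ ∈ Y` lies in the closure of `S ⊆ Y` iff every subset of `X` absorbing `S`
(i.e. belonging to every cluster of `S`) belongs to `σ`. -/
def clRel (Y S : Set (Set (Set X))) : Set (Set (Set X)) :=
  {σ ∈ Y | ∀ C : Set X, (∀ τ ∈ S, C ∈ τ) → C ∈ σ}

/-- A subset of `Y` is relatively closed iff it contains its relative closure. -/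
def relClosed (Y K : Set (Set (Set X))) : Prop :=
  K ⊆ Y ∧ clRel Y K ⊆ K

/-- Interior in the boundary `𝒰X`. -/
def intU (cp : CoarseProximity X) (S : Set (Set (Set X))) : Set (Set (Set X)) :=
  UX cp \ clRel (UX cp) (UX cp \ S)

/-- Closed subsets of the boundary `𝒰X`. -/
def IsClosedU (cp : CoarseProximity X) (K : Set (Set (Set X))) : Prop :=
  relClosed (UX cp) K

/-- Open subsets of the boundary `𝒰X`. -/
def IsOpenU (cp : CoarseProximity X) (U : Set (Set (Set X))) : Prop :=
  U ⊆ UX cp ∧ IsClosedU cp (UX cp \ U)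

/-- if `σ` belongs to the boundary `𝒰X` and `A, B ∈ σ`, then `A b B`. -/
theorem b_of_mem_boundary_cluster (cp : CoarseProximity X) (σ : Set (Set X))
    (hσ : σ ∈ UX cp) (A B : Set X) (hA : A ∈ σ) (hB : B ∈ σ) : cp.b A B := by
  obtain ⟨hcl, hub⟩ := hσ
  have mono : ∀ A' A D : Set X, cp.b A' D → A' ⊆ A → cp.b A D := by
    intro A' A D h hsub
    have := (cp.isCP.union_iff A' A D).mpr (Or.inl h)
    rwa [union_eq_self_of_subset_left hsub] at this
  by_contra hnb
  obtain ⟨E, hAE, hEB⟩ := cp.isCP.strong A B hnb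
  have huniv : (univ : Set X) ∈ σ := by
    apply hcl.mem_of_close
    intro C hC
    exact Or.inr (cp.isCP.rel_of_inter univ C (by simpa [univ_inter] using hub C hC))
  have hsplit : E ∈ σ ∨ univ \ E ∈ σ := by
    apply hcl.union_cases
    rwa [union_diff_cancel (subset_univ E)]
  rcases hsplit with hE | hE
  · have hinter : A ∩ E ∈ cp.B := by
      by_contra h
      exact hAE (cp.isCP.rel_of_inter A E h)
    have hAE' : A \ E ∈ σ := by
      rcases hcl.union_cases (A \ E) (A ∩ E) (by rwa [diff_union_inter]) with h | h
      · exact h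
      · exact absurd hinter (hub _ h)
    rcases hcl.close _ hAE' _ hE with h | h
    · simp at h
    · exact hAE (mono _ _ _ h diff_subset)
  · have hinter : (univ \ E) ∩ B ∈ cp.B := by
      by_contra h
      exact hEB (cp.isCP.rel_of_inter _ B h)
    have hBE' : B \ (univ \ E) ∈ σ := by
      rcases hcl.union_cases (B \ (univ \ E)) (B ∩ (univ \ E)) (by rwa [diff_union_inter]) with h | h
      · exact h
      · exact absurd (cp.isCP.subset_mem _ _ hinter (by rw [inter_comm])) (hub _ h)
    rcases hcl.close _ hBE' _ hE with h | h
    · simp at h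
    · exact hEB (cp.isCP.symm _ _ (mono _ _ _ h diff_subset))
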